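/- arXiv:2410.17749 — 5 statements merged into one kernel-verified Lean document; each statement's English description precedes it below -/
import Mathlib

section
/- If p ∈ A_T and q ∈ A_T, then p/(p+q) ∈ A_T. That is, if p and q are root marginals of finite tree 2-SAT formulas, then so is p/(p+q) (realized by joining the two trees to a new root variable o through one clause in which o appears negated and the old root non-negated, and one clause in which o appears non-negated and the old root non-negated). -/
section GeneralGraphLemmas
open SimpleGraph Walk

variable {W : Type*} {G : SimpleGraph W}

lemma adj_dist_le (hc : G.Connected) (r : W) {u v : W} (h : G.Adj u v) :
    G.dist r v ≤ G.dist r u + 1 := by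
  have h1 : G.dist u v ≤ 1 := by
    simpa using SimpleGraph.dist_le (Walk.cons h Walk.nil)
  calc G.dist r v ≤ G.dist r u + G.dist u v := hc.dist_triangle
    _ ≤ G.dist r u + 1 := by omega

lemma exists_parent (hc : G.Connected) (r : W) {v : W} (h : v ≠ r) :
    ∃ u, G.Adj v u ∧ G.dist r u + 1 = G.dist r v := by
  obtain ⟨p, hp⟩ := hc.exists_walk_length_eq_dist v r
  cases p with
  | nil => exact absurd rfl h
  | @cons _ u _ ha q =>
    refine ⟨u, ha, ?_⟩
    have h1 : G.dist r u ≤ q.length := by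
      simpa [SimpleGraph.dist_comm] using SimpleGraph.dist_le q
    have h2 : G.dist r v ≤ G.dist r u + 1 := adj_dist_le hc r ha.symm
    have h3 : G.dist r v = q.length + 1 := by
      rw [SimpleGraph.dist_comm]; simpa using hp.symm
    omega

/-- In a tree, a vertex cannot have two distinct neighbors closer to the root. -/
lemma parent_unique (ht : G.IsTree) (r : W) {v u₁ u₂ : W}
    (h₁ : G.Adj v u₁) (h₂ : G.Adj v u₂)
    (d₁ : G.dist r u₁ < G.dist r v) (d₂ : G.dist r u₂ < G.dist r v) : u₁ = u₂ := by
  classical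
  have hc := ht.isConnected
  set d := G.dist r v with hd
  have key : ∀ {u : W}, G.Adj v u → G.dist r u < d →
      ∃ q : G.Walk v r, q.IsPath ∧ q.length = d ∧ q.getVert 1 = u := by
    intro u hadj hlt
    have hge : d ≤ G.dist r u + 1 := adj_dist_le hc r hadj.symm
    have heq : G.dist r u = d - 1 := by omega
    obtain ⟨p, hp, hlen⟩ := hc.exists_path_of_dist u r
    have hlen' : p.length = d - 1 := by rw [hlen, SimpleGraph.dist_comm, heq]
    have hvns : v ∉ p.support := by
      intro hv
      have h5 := SimpleGraph.Walk.take_spec p hv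
      have h6 : G.dist v r ≤ (p.dropUntil v hv).length :=
        SimpleGraph.dist_le _
      have h7 : (p.dropUntil v hv).length ≤ p.length :=
        SimpleGraph.Walk.length_dropUntil_le p hv
      have h8 : G.dist v r = d := by rw [SimpleGraph.dist_comm]
      omega
    refine ⟨Walk.cons hadj p, ?_, ?_, ?_⟩
    · rw [Walk.cons_isPath_iff]; exact ⟨hp, hvns⟩
    · have : 1 ≤ d := by omega
      simp [hlen']; omega
    · exact (Walk.getVert_cons_succ (n := 0) p hadj).trans p.getVert_zero
  obtain ⟨q₁, hq₁, hl₁, hg₁⟩ := key h₁ d₁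
  obtain ⟨q₂, hq₂, hl₂, hg₂⟩ := key h₂ d₂
  have := ht.IsAcyclic.path_unique ⟨q₁, hq₁⟩ ⟨q₂, hq₂⟩
  have hq : q₁ = q₂ := Subtype.ext_iff.mp this
  rw [← hg₁, ← hg₂, hq]

/-- In a tree, adjacent vertices have different distances to any root. -/
lemma adj_dist_ne (ht : G.IsTree) (r : W) {u v : W} (h : G.Adj u v) :
    G.dist r u ≠ G.dist r v := by
  classical
  have hc := ht.isConnected
  intro heq
  set d := G.dist r v with hd
  have hne : u ≠ v := h.ne
  have hd1 : 1 ≤ d := by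
    rcases Nat.eq_zero_or_pos d with h0 | h1
    · exfalso
      have hu : u = r := by
        have : G.dist r u = 0 := by rw [heq, h0]
        exact ((hc.dist_eq_zero_iff).mp this).symm
      have hv : v = r := by
        have : G.dist r v = 0 := by rw [← hd, h0]
        exact ((hc.dist_eq_zero_iff).mp this).symm
      exact hne (hu.trans hv.symm)
    · exact h1
  obtain ⟨p, hp, hlen⟩ := hc.exists_path_of_dist u r
  have hlenp : p.length = d := by rw [hlen, SimpleGraph.dist_comm, heq]
  have hvns : v ∉ p.support := by
    intro hv
    have h5 := SimpleGraph.Walk.take_spec p hv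
    have htake : 1 ≤ (p.takeUntil v hv).length := by
      rcases Nat.eq_zero_or_pos (p.takeUntil v hv).length with h0 | h1
      · exfalso
        exact hne (SimpleGraph.Walk.eq_of_length_eq_zero (p := p.takeUntil v hv) h0)
      · exact h1
    have h6 : G.dist v r ≤ (p.dropUntil v hv).length := SimpleGraph.dist_le _
    have h7 : (p.takeUntil v hv).length + (p.dropUntil v hv).length = p.length := by
      rw [← SimpleGraph.Walk.length_append, h5]
    have h8 : G.dist v r = d := by rw [SimpleGraph.dist_comm]
    omega
  have hpath : (Walk.cons h.symm p).IsPath := by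
    rw [Walk.cons_isPath_iff]; exact ⟨hp, hvns⟩
  obtain ⟨q, hq, hlq⟩ := hc.exists_path_of_dist v r
  have := ht.IsAcyclic.path_unique ⟨Walk.cons h.symm p, hpath⟩ ⟨q, hq⟩
  have hq' : Walk.cons h.symm p = q := Subtype.ext_iff.mp this
  have : (Walk.cons h.symm p).length = q.length := by rw [hq']
  simp only [Walk.length_cons] at this
  rw [hlq, SimpleGraph.dist_comm, ← hd] at this
  omega

lemma card_le_card_edgeFinset [Fintype W] [Fintype G.edgeSet]
    (hc : G.Connected) : Fintype.card W ≤ G.edgeFinset.card + 1 := by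
  classical
  have hne : Nonempty W := hc.nonempty
  obtain ⟨r⟩ := hne
  -- parent function
  have hpar : ∀ v : W, v ≠ r → ∃ u, G.Adj v u ∧ G.dist r u + 1 = G.dist r v :=
    fun v hv => exists_parent hc r hv
  set f : W → Sym2 W := fun v =>
    if h : v ≠ r then s(v, (hpar v h).choose) else s(r, r) with hf
  have hmaps : ∀ v ∈ Finset.univ.erase r, f v ∈ G.edgeFinset := by
    intro v hv
    have hvr : v ≠ r := (Finset.mem_erase.mp hv).1
    rw [hf]; simp only [dif_pos hvr]
    rw [SimpleGraph.mem_edgeFinset, SimpleGraph.mem_edgeSet]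
    exact (hpar v hvr).choose_spec.1
  have hinj : Set.InjOn f (Finset.univ.erase r) := by
    intro v hv w hw hvw
    have hvr : v ≠ r := (Finset.mem_erase.mp hv).1
    have hwr : w ≠ r := (Finset.mem_erase.mp hw).1
    rw [hf] at hvw
    simp only [dif_pos hvr, dif_pos hwr, Sym2.eq_iff] at hvw
    rcases hvw with ⟨h1, h2⟩ | ⟨h1, h2⟩
    · exact h1
    · exfalso
      have d1 := (hpar v hvr).choose_spec.2
      have d2 := (hpar w hwr).choose_spec.2
      rw [h2] at d1
      rw [← h1] at d2
      omega
  have := Finset.card_le_card_of_injOn f hmaps hinj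
  have hcard : (Finset.univ.erase r).card = Fintype.card W - 1 := by
    rw [Finset.card_erase_of_mem (Finset.mem_univ r), Finset.card_univ]
  have hpos : 1 ≤ Fintype.card W := Fintype.card_pos_iff.mpr ⟨r⟩
  omega

lemma isTree_of_connected_of_card [Fintype W] [Fintype G.edgeSet]
    (hc : G.Connected) (hcard : G.edgeFinset.card + 1 ≤ Fintype.card W) : G.IsTree := by
  classical
  refine ⟨hc, ?_⟩
  intro v c hcyc
  -- the cycle has an edge
  have hedges : c.edges ≠ [] := by
    intro h
    have := hcyc.three_le_length
    have : c.length = 0 := by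
      have := SimpleGraph.Walk.length_edges c
      rw [h] at this; simpa using this.symm
    omega
  obtain ⟨e, he⟩ := List.exists_mem_of_ne_nil _ hedges
  induction e with
  | _ x y =>
    have hkey := SimpleGraph.adj_and_reachable_delete_edges_iff_exists_cycle.mpr ⟨v, c, hcyc, he⟩
    obtain ⟨hadj, hreach⟩ := hkey
    set G' := G \ SimpleGraph.fromEdgeSet {s(x, y)} with hG'
    have hle : G' ≤ G := sdiff_le
    -- G' is connected
    have htrans : ∀ {a b : W}, G.Walk a b → G'.Reachable a b := by
      intro a b p
      induction p with
      | nil => exact SimpleGraph.Reachable.refl _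
      | @cons a' z b' h q ih =>
        refine SimpleGraph.Reachable.trans ?_ ih
        by_cases hxy : s(a', z) = s(x, y)
        · rw [Sym2.eq_iff] at hxy
          rcases hxy with ⟨rfl, rfl⟩ | ⟨rfl, rfl⟩
          · exact hreach
          · exact hreach.symm
        · refine SimpleGraph.Adj.reachable ?_
          rw [hG', SimpleGraph.sdiff_adj]
          refine ⟨h, ?_⟩
          rw [SimpleGraph.fromEdgeSet_adj]
          rintro ⟨hmem, -⟩
          exact hxy (Set.mem_singleton_iff.mp hmem)
    have hc' : G'.Connected := by
      have hne2 : Nonempty W := hc.nonempty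
      exact SimpleGraph.Connected.mk (fun a b => (hc.preconnected a b).elim htrans)
    -- edge counts
    have hesub : G'.edgeFinset ⊆ G.edgeFinset.erase s(x, y) := by
      intro e' he'
      rw [SimpleGraph.mem_edgeFinset] at he'
      rw [Finset.mem_erase, SimpleGraph.mem_edgeFinset]
      constructor
      · intro heq
        subst heq
        rw [SimpleGraph.mem_edgeSet] at he'
        rw [hG', SimpleGraph.sdiff_adj] at he'
        exact he'.2 (by rw [SimpleGraph.fromEdgeSet_adj]; exact ⟨rfl, he'.1.ne⟩)
      · exact SimpleGraph.edgeSet_mono hle he'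
    have h1 : G'.edgeFinset.card ≤ G.edgeFinset.card - 1 := by
      have := Finset.card_le_card hesub
      have hxyG : s(x, y) ∈ G.edgeFinset := by
        rw [SimpleGraph.mem_edgeFinset, SimpleGraph.mem_edgeSet]; exact hadj
      have := Finset.card_erase_of_mem hxyG
      omega
    have h2 := card_le_card_edgeFinset hc'
    have hpos : 1 ≤ G.edgeFinset.card := by
      by_contra h
      have h0 : G.edgeFinset.card = 0 := by omega
      have hxyG : s(x, y) ∈ G.edgeFinset := by
        rw [SimpleGraph.mem_edgeFinset, SimpleGraph.mem_edgeSet]; exact hadj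
      rw [Finset.card_eq_zero] at h0
      rw [h0] at hxyG
      simp at hxyG
    omega

end GeneralGraphLemmas

/-- A 2-SAT clause over variables `V`: two distinct variables `x ≠ y` together with
signs `sx, sy : Bool` (`true` encodes `+1`, `false` encodes `-1`). -/
structure Clause2 (V : Type) where
  x : V
  y : V
  sx : Bool
  sy : Bool
  hxy : x ≠ y

variable {V : Type} [Fintype V] [DecidableEq V]

/-- Variable `v` occurs in clause `a`. -/
def occurs (v : V) (a : Clause2 V) : Prop := v = a.x ∨ v = a.y

instance (v : V) (a : Clause2 V) : Decidable (occurs v a) := by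
  unfold occurs; infer_instance

/-- An assignment `σ : V → Bool` satisfies clause `a` if one of its two literals is satisfied. -/
def satClause (σ : V → Bool) (a : Clause2 V) : Prop := σ a.x = a.sx ∨ σ a.y = a.sy

instance (σ : V → Bool) (a : Clause2 V) : Decidable (satClause σ a) := by
  unfold satClause; infer_instance

/-- The set `S(Φ)` of satisfying assignments of the formula `Φ`. -/
def sols (Φ : Finset (Clause2 V)) : Finset (V → Bool) :=
  Finset.univ.filter fun σ => ∀ a ∈ Φ, satClause σ a

/-- The marginal `μ_Φ(σ_v = b)`: the fraction of satisfying assignments with `σ v = b`. -/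
noncomputable def marginal (Φ : Finset (Clause2 V)) (v : V) (b : Bool) : ℝ :=
  (((sols Φ).filter fun σ => σ v = b).card : ℝ) / ((sols Φ).card : ℝ)

/-- The factor graph `G(Φ)`: the bipartite graph on variables and clauses with an edge
`{v, a}` whenever `v` occurs in `a`. -/
def factorGraph (Φ : Finset (Clause2 V)) : SimpleGraph (V ⊕ {a // a ∈ Φ}) :=
  SimpleGraph.fromRel fun u w =>
    match u, w with
    | Sum.inl v, Sum.inr a => occurs v a.val
    | _, _ => False

/-- `A_T`: the set of all root marginals `μ_T(σ_o = 1)` of finite rooted tree formulas. -/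
noncomputable def treeMarginals : Set ℝ :=
  {r | ∃ (n : ℕ) (Φ : Finset (Clause2 (Fin n))) (o : Fin n),
        (factorGraph Φ).IsTree ∧ marginal Φ o true = r}


set_option linter.unusedSectionVars false

instance : DecidableEq (Clause2 V) := fun a b =>
  decidable_of_iff (a.x = b.x ∧ a.y = b.y ∧ a.sx = b.sx ∧ a.sy = b.sy) (by
    cases a; cases b; simp [Clause2.mk.injEq])

lemma factorGraph_adj {Φ : Finset (Clause2 V)} {v : V} {a : {a // a ∈ Φ}} :
    (factorGraph Φ).Adj (Sum.inl v) (Sum.inr a) ↔ occurs v a.val := by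
  rw [factorGraph, SimpleGraph.fromRel_adj]
  simp

lemma factorGraph_adj_cases {Φ : Finset (Clause2 V)} {u w : V ⊕ {a // a ∈ Φ}}
    (h : (factorGraph Φ).Adj u w) :
    (∃ v a, u = Sum.inl v ∧ w = Sum.inr a ∧ occurs v a.val) ∨
    (∃ v a, u = Sum.inr a ∧ w = Sum.inl v ∧ occurs v a.val) := by
  rw [factorGraph, SimpleGraph.fromRel_adj] at h
  obtain ⟨-, h | h⟩ := h
  · match u, w, h with
    | Sum.inl v, Sum.inr a, h => exact Or.inl ⟨v, a, rfl, rfl, h⟩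
  · match u, w, h with
    | Sum.inr a, Sum.inl v, h => exact Or.inr ⟨v, a, rfl, rfl, h⟩

lemma factorGraph_edgeFinset_card (Φ : Finset (Clause2 V))
    [Fintype (factorGraph Φ).edgeSet] :
    (factorGraph Φ).edgeFinset.card = 2 * Φ.card := by
  classical
  have hset : (factorGraph Φ).edgeFinset =
      Φ.attach.biUnion (fun a =>
        {s(Sum.inl a.1.x, Sum.inr a), s(Sum.inl a.1.y, Sum.inr a)}) := by
    ext e
    induction e with
    | _ u w =>
      rw [SimpleGraph.mem_edgeFinset, SimpleGraph.mem_edgeSet, Finset.mem_biUnion]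
      constructor
      · intro h
        rcases factorGraph_adj_cases h with ⟨v, a, rfl, rfl, hocc⟩ | ⟨v, a, rfl, rfl, hocc⟩
        · refine ⟨a, Finset.mem_attach _ _, ?_⟩
          rcases hocc with rfl | rfl
          · simp
          · simp
        · refine ⟨a, Finset.mem_attach _ _, ?_⟩
          rcases hocc with rfl | rfl
          · simp [Sym2.eq_swap]
          · simp [Sym2.eq_swap]
      · rintro ⟨a, -, hmem⟩
        rw [Finset.mem_insert, Finset.mem_singleton] at hmem
        rcases hmem with hmem | hmem <;>
        · rw [Sym2.eq_iff] at hmem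
          rcases hmem with ⟨rfl, rfl⟩ | ⟨rfl, rfl⟩
          · rw [factorGraph_adj]; first | exact Or.inl rfl | exact Or.inr rfl
          · exact ((factorGraph_adj).mpr (by first | exact Or.inl rfl | exact Or.inr rfl)).symm
  rw [hset, Finset.card_biUnion]
  · have : ∀ a ∈ Φ.attach,
        ({s(Sum.inl a.1.x, Sum.inr a), s(Sum.inl a.1.y, Sum.inr a)} :
          Finset (Sym2 (V ⊕ {a // a ∈ Φ}))).card = 2 := by
      intro a _
      rw [Finset.card_insert_of_notMem, Finset.card_singleton]
      rw [Finset.mem_singleton]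
      intro h
      rw [Sym2.eq_iff] at h
      rcases h with ⟨h1, -⟩ | ⟨h1, h2⟩
      · exact a.1.hxy (Sum.inl_injective h1)
      · simp at h1
    rw [Finset.sum_congr rfl this, Finset.sum_const, Finset.card_attach, smul_eq_mul, Nat.mul_comm]
  · intro a _ b _ hab
    simp only [Finset.disjoint_left, Finset.mem_insert, Finset.mem_singleton]
    rintro e (rfl | rfl) (h | h) <;>
    · rw [Sym2.eq_iff] at h
      rcases h with ⟨-, h2⟩ | ⟨h1, -⟩ <;>
        first
          | exact hab (Sum.inr_injective h2)
          | simp at h1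

set_option linter.unusedSectionVars false

lemma sols_nonempty_of_isTree (Φ : Finset (Clause2 V))
    (ht : (factorGraph Φ).IsTree) : (sols Φ).Nonempty := by
  classical
  set G := factorGraph Φ with hG
  have hc := ht.isConnected
  obtain ⟨r⟩ := hc.nonempty
  set P : V → Prop := fun y => ∃ a : {a // a ∈ Φ},
    occurs y a.1 ∧ G.dist r (Sum.inr a) < G.dist r (Sum.inl y) with hP
  set σ : V → Bool := fun y =>
    if h : P y then (if y = h.choose.1.x then h.choose.1.sx else h.choose.1.sy) else true
    with hσ
  refine ⟨σ, ?_⟩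
  rw [sols, Finset.mem_filter]
  refine ⟨Finset.mem_univ _, ?_⟩
  intro c hcΦ
  set A : {a // a ∈ Φ} := ⟨c, hcΦ⟩ with hA
  have hax : G.Adj (Sum.inl c.x) (Sum.inr A) := factorGraph_adj.mpr (Or.inl rfl)
  have hay : G.Adj (Sum.inl c.y) (Sum.inr A) := factorGraph_adj.mpr (Or.inr rfl)
  -- key: a variable of c farther from the root than c gets its value from c
  have key : ∀ y0, occurs y0 c →
      G.dist r (Sum.inr A) < G.dist r (Sum.inl y0) →
      σ y0 = (if y0 = c.x then c.sx else c.sy) := by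
    intro y0 hocc hdlt
    have hy0A : G.Adj (Sum.inl y0) (Sum.inr A) := factorGraph_adj.mpr hocc
    have hPy : P y0 := ⟨A, hocc, hdlt⟩
    have hB := hPy.choose_spec
    have hBA : hPy.choose = A := by
      have hadjB : G.Adj (Sum.inl y0) (Sum.inr hPy.choose) := factorGraph_adj.mpr hB.1
      have := parent_unique ht r (v := Sum.inl y0) hadjB hy0A hB.2 hdlt
      exact Sum.inr_injective this
    rw [hσ]
    simp only [dif_pos hPy]
    rw [hBA]
  -- one of the two variables of c is farther from the root than c
  have hxne : G.dist r (Sum.inl c.x) ≠ G.dist r (Sum.inr A) := adj_dist_ne ht r hax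
  have hyne : G.dist r (Sum.inl c.y) ≠ G.dist r (Sum.inr A) := adj_dist_ne ht r hay
  have hnotboth : ¬ (G.dist r (Sum.inl c.x) < G.dist r (Sum.inr A) ∧
      G.dist r (Sum.inl c.y) < G.dist r (Sum.inr A)) := by
    rintro ⟨h1, h2⟩
    have := parent_unique ht r (v := Sum.inr A) hax.symm hay.symm h1 h2
    exact c.hxy (Sum.inl_injective this)
  rcases Nat.lt_or_ge (G.dist r (Sum.inr A)) (G.dist r (Sum.inl c.x)) with hx | hx
  · -- c.x is farther: σ c.x = c.sx
    have := key c.x (Or.inl rfl) hx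
    rw [if_pos rfl] at this
    exact Or.inl this
  · have hxlt : G.dist r (Sum.inl c.x) < G.dist r (Sum.inr A) := by omega
    have hy : G.dist r (Sum.inr A) < G.dist r (Sum.inl c.y) := by
      rcases Nat.lt_or_ge (G.dist r (Sum.inr A)) (G.dist r (Sum.inl c.y)) with h | h
      · exact h
      · exact absurd ⟨hxlt, by omega⟩ hnotboth
    have := key c.y (Or.inr rfl) hy
    rw [if_neg (fun h => c.hxy h.symm)] at this
    exact Or.inr this

def mapClause {V W : Type} (f : V → W) (hf : Function.Injective f) (a : Clause2 V) :
    Clause2 W :=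
  ⟨f a.x, f a.y, a.sx, a.sy, fun h => a.hxy (hf h)⟩

lemma mapClause_x {V W : Type} (f : V → W) (hf : Function.Injective f) (a : Clause2 V) :
    (mapClause f hf a).x = f a.x := rfl

lemma mapClause_injective {V W : Type} (f : V → W) (hf : Function.Injective f) :
    Function.Injective (mapClause f hf) := by
  intro a b h
  cases a; cases b
  simp only [mapClause, Clause2.mk.injEq] at h ⊢
  exact ⟨hf h.1, hf h.2.1, h.2.2⟩

def emb1 (n m : ℕ) : Fin n → Fin (n + m + 1) :=
  fun i => ⟨i.1, lt_of_lt_of_le i.2 (by omega)⟩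

def emb2 (n m : ℕ) : Fin m → Fin (n + m + 1) :=
  fun j => ⟨n + j.1, by have := j.2; omega⟩

def rootV (n m : ℕ) : Fin (n + m + 1) := ⟨n + m, by omega⟩

lemma emb1_injective (n m : ℕ) : Function.Injective (emb1 n m) := by
  intro i j h
  have := congrArg Fin.val h
  simp only [emb1] at this
  exact Fin.ext this

lemma emb2_injective (n m : ℕ) : Function.Injective (emb2 n m) := by
  intro i j h
  have := congrArg Fin.val h
  simp only [emb2] at this
  exact Fin.ext (by omega)

lemma emb1_ne_root (n m : ℕ) (i : Fin n) : emb1 n m i ≠ rootV n m := by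
  intro h
  have := congrArg Fin.val h
  simp only [emb1, rootV] at this
  have := i.2
  omega

lemma emb2_ne_root (n m : ℕ) (j : Fin m) : emb2 n m j ≠ rootV n m := by
  intro h
  have := congrArg Fin.val h
  simp only [emb2, rootV] at this
  have := j.2
  omega

def glueF (n m : ℕ) (b : Bool) (σ1 : Fin n → Bool) (σ2 : Fin m → Bool) :
    Fin (n + m + 1) → Bool :=
  fun v => if h : v.1 < n then σ1 ⟨v.1, h⟩ else if h2 : v.1 - n < m then σ2 ⟨v.1 - n, h2⟩ else b

lemma glueF_emb1 (n m : ℕ) (b σ1 σ2) (i : Fin n) :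
    glueF n m b σ1 σ2 (emb1 n m i) = σ1 i := by
  unfold glueF
  rw [dif_pos (show (emb1 n m i).1 < n from i.2)]
  rfl

lemma glueF_emb2 (n m : ℕ) (b σ1 σ2) (j : Fin m) :
    glueF n m b σ1 σ2 (emb2 n m j) = σ2 j := by
  unfold glueF
  rw [dif_neg (show ¬((emb2 n m j).1 < n) by simp only [emb2]; omega),
    dif_pos (show (emb2 n m j).1 - n < m by simp only [emb2]; have := j.2; omega)]
  congr 1
  exact Fin.ext (show n + j.1 - n = j.1 by omega)

lemma glueF_root (n m : ℕ) (b σ1 σ2) :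
    glueF n m b σ1 σ2 (rootV n m) = b := by
  unfold glueF
  rw [dif_neg (show ¬((rootV n m).1 < n) by simp only [rootV]; omega),
    dif_neg (show ¬((rootV n m).1 - n < m) by simp only [rootV]; omega)]

lemma glueF_recon (n m : ℕ) (b : Bool) (σ : Fin (n + m + 1) → Bool)
    (hb : σ (rootV n m) = b) :
    glueF n m b (σ ∘ emb1 n m) (σ ∘ emb2 n m) = σ := by
  funext v
  simp only [glueF]
  by_cases h : v.1 < n
  · rw [dif_pos h]
    exact congrArg σ (Fin.ext rfl)
  · rw [dif_neg h]
    by_cases h2 : v.1 - n < m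
    · rw [dif_pos h2]
      refine congrArg σ (Fin.ext ?_)
      simp only [emb2]
      omega
    · rw [dif_neg h2]
      rw [← hb]
      refine congrArg σ (Fin.ext ?_).symm
      have := v.2
      simp only [rootV]
      omega

lemma mem_sols {Φ : Finset (Clause2 V)} {σ : V → Bool} :
    σ ∈ sols Φ ↔ ∀ a ∈ Φ, satClause σ a := by simp [sols]

def comboClause1 (n m : ℕ) (o₁ : Fin n) : Clause2 (Fin (n + m + 1)) :=
  ⟨rootV n m, emb1 n m o₁, false, true, fun h => emb1_ne_root n m o₁ h.symm⟩

def comboClause2 (n m : ℕ) (o₂ : Fin m) : Clause2 (Fin (n + m + 1)) :=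
  ⟨rootV n m, emb2 n m o₂, true, true, fun h => emb2_ne_root n m o₂ h.symm⟩

def comboFormula (n m : ℕ) (Φ₁ : Finset (Clause2 (Fin n))) (Φ₂ : Finset (Clause2 (Fin m)))
    (o₁ : Fin n) (o₂ : Fin m) : Finset (Clause2 (Fin (n + m + 1))) :=
  (Φ₁.image (mapClause (emb1 n m) (emb1_injective n m)) ∪
   Φ₂.image (mapClause (emb2 n m) (emb2_injective n m))) ∪
  {comboClause1 n m o₁, comboClause2 n m o₂}

variable {n m : ℕ} {Φ₁ : Finset (Clause2 (Fin n))} {Φ₂ : Finset (Clause2 (Fin m))}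
  {o₁ : Fin n} {o₂ : Fin m}

lemma combo_mem1 (a : Clause2 (Fin n)) (ha : a ∈ Φ₁) :
    mapClause (emb1 n m) (emb1_injective n m) a ∈ comboFormula n m Φ₁ Φ₂ o₁ o₂ :=
  Finset.mem_union_left _ (Finset.mem_union_left _ (Finset.mem_image_of_mem _ ha))

lemma combo_mem2 (a : Clause2 (Fin m)) (ha : a ∈ Φ₂) :
    mapClause (emb2 n m) (emb2_injective n m) a ∈ comboFormula n m Φ₁ Φ₂ o₁ o₂ :=
  Finset.mem_union_left _ (Finset.mem_union_right _ (Finset.mem_image_of_mem _ ha))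

lemma combo_memc1 : comboClause1 n m o₁ ∈ comboFormula n m Φ₁ Φ₂ o₁ o₂ :=
  Finset.mem_union_right _ (Finset.mem_insert_self _ _)

lemma combo_memc2 : comboClause2 n m o₂ ∈ comboFormula n m Φ₁ Φ₂ o₁ o₂ :=
  Finset.mem_union_right _ (by simp)

/-- The graph homomorphism from the factor graph of `Φ₁` into that of the combined formula. -/
def comboHom1 : factorGraph Φ₁ →g factorGraph (comboFormula n m Φ₁ Φ₂ o₁ o₂) where
  toFun := Sum.map (emb1 n m)
    (fun a => ⟨mapClause (emb1 n m) (emb1_injective n m) a.1, combo_mem1 a.1 a.2⟩)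
  map_rel' := by
    intro u w h
    rcases factorGraph_adj_cases h with ⟨v, a, rfl, rfl, hocc⟩ | ⟨v, a, rfl, rfl, hocc⟩
    · exact factorGraph_adj.mpr
        (by rcases hocc with h' | h'
            · exact Or.inl (congrArg (emb1 n m) h')
            · exact Or.inr (congrArg (emb1 n m) h'))
    · exact (factorGraph_adj.mpr
        (by rcases hocc with h' | h'
            · exact Or.inl (congrArg (emb1 n m) h')
            · exact Or.inr (congrArg (emb1 n m) h'))).symm

def comboHom2 : factorGraph Φ₂ →g factorGraph (comboFormula n m Φ₁ Φ₂ o₁ o₂) where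
  toFun := Sum.map (emb2 n m)
    (fun a => ⟨mapClause (emb2 n m) (emb2_injective n m) a.1, combo_mem2 a.1 a.2⟩)
  map_rel' := by
    intro u w h
    rcases factorGraph_adj_cases h with ⟨v, a, rfl, rfl, hocc⟩ | ⟨v, a, rfl, rfl, hocc⟩
    · exact factorGraph_adj.mpr
        (by rcases hocc with h' | h'
            · exact Or.inl (congrArg (emb2 n m) h')
            · exact Or.inr (congrArg (emb2 n m) h'))
    · exact (factorGraph_adj.mpr
        (by rcases hocc with h' | h'
            · exact Or.inl (congrArg (emb2 n m) h')
            · exact Or.inr (congrArg (emb2 n m) h'))).symm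

lemma combo_connected (ht₁ : (factorGraph Φ₁).Connected) (ht₂ : (factorGraph Φ₂).Connected) :
    (factorGraph (comboFormula n m Φ₁ Φ₂ o₁ o₂)).Connected := by
  classical
  set Φc := comboFormula n m Φ₁ Φ₂ o₁ o₂ with hΦc
  have hadj1 : (factorGraph Φc).Adj (Sum.inl (rootV n m))
      (Sum.inr ⟨comboClause1 n m o₁, combo_memc1⟩) := factorGraph_adj.mpr (Or.inl rfl)
  have hadj1' : (factorGraph Φc).Adj (Sum.inl (emb1 n m o₁))
      (Sum.inr ⟨comboClause1 n m o₁, combo_memc1⟩) := factorGraph_adj.mpr (Or.inr rfl)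
  have hadj2 : (factorGraph Φc).Adj (Sum.inl (rootV n m))
      (Sum.inr ⟨comboClause2 n m o₂, combo_memc2⟩) := factorGraph_adj.mpr (Or.inl rfl)
  have hadj2' : (factorGraph Φc).Adj (Sum.inl (emb2 n m o₂))
      (Sum.inr ⟨comboClause2 n m o₂, combo_memc2⟩) := factorGraph_adj.mpr (Or.inr rfl)
  have hro₁ : (factorGraph Φc).Reachable (Sum.inl (rootV n m)) (Sum.inl (emb1 n m o₁)) :=
    hadj1.reachable.trans hadj1'.reachable.symm
  have hro₂ : (factorGraph Φc).Reachable (Sum.inl (rootV n m)) (Sum.inl (emb2 n m o₂)) :=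
    hadj2.reachable.trans hadj2'.reachable.symm
  have hR1 : ∀ u, (factorGraph Φc).Reachable (Sum.inl (rootV n m))
      ((comboHom1 (n := n) (m := m) (Φ₁ := Φ₁) (Φ₂ := Φ₂) (o₁ := o₁) (o₂ := o₂)) u) :=
    fun u => hro₁.trans (SimpleGraph.Reachable.map comboHom1
      (ht₁.preconnected (Sum.inl o₁) u))
  have hR2 : ∀ u, (factorGraph Φc).Reachable (Sum.inl (rootV n m))
      ((comboHom2 (n := n) (m := m) (Φ₁ := Φ₁) (Φ₂ := Φ₂) (o₁ := o₁) (o₂ := o₂)) u) :=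
    fun u => hro₂.trans (SimpleGraph.Reachable.map comboHom2
      (ht₂.preconnected (Sum.inl o₂) u))
  have hreach : ∀ w, (factorGraph Φc).Reachable (Sum.inl (rootV n m)) w := by
    intro w
    match w with
    | Sum.inl v =>
      by_cases h1 : v.1 < n
      · have hv : emb1 n m ⟨v.1, h1⟩ = v := Fin.ext rfl
        have := hR1 (Sum.inl ⟨v.1, h1⟩)
        rwa [show (comboHom1 (Sum.inl (⟨v.1, h1⟩ : Fin n)) :
            Fin (n + m + 1) ⊕ {a // a ∈ Φc}) = Sum.inl v from congrArg Sum.inl hv] at this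
      · by_cases h2 : v.1 - n < m
        · have hv : emb2 n m ⟨v.1 - n, h2⟩ = v := Fin.ext (by simp only [emb2]; omega)
          have := hR2 (Sum.inl ⟨v.1 - n, h2⟩)
          rwa [show (comboHom2 (Sum.inl (⟨v.1 - n, h2⟩ : Fin m)) :
              Fin (n + m + 1) ⊕ {a // a ∈ Φc}) = Sum.inl v from congrArg Sum.inl hv] at this
        · have hv : v = rootV n m := Fin.ext (by have := v.2; simp only [rootV]; omega)
          rw [hv]
    | Sum.inr A =>
      obtain ⟨c, hcmem⟩ := A
      rcases Finset.mem_union.mp hcmem with h | h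
      · rcases Finset.mem_union.mp h with h | h
        · obtain ⟨a, ha, rfl⟩ := Finset.mem_image.mp h
          exact hR1 (Sum.inr ⟨a, ha⟩)
        · obtain ⟨a, ha, rfl⟩ := Finset.mem_image.mp h
          exact hR2 (Sum.inr ⟨a, ha⟩)
      · rcases Finset.mem_insert.mp h with rfl | h
        · exact hadj1.reachable
        · rw [Finset.mem_singleton] at h
          subst h
          exact hadj2.reachable
  have : Nonempty (Fin (n + m + 1) ⊕ {a // a ∈ Φc}) := ⟨Sum.inl (rootV n m)⟩
  exact SimpleGraph.Connected.mk fun a b => (hreach a).symm.trans (hreach b)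

lemma combo_isTree (ht₁ : (factorGraph Φ₁).IsTree) (ht₂ : (factorGraph Φ₂).IsTree) :
    (factorGraph (comboFormula n m Φ₁ Φ₂ o₁ o₂)).IsTree := by
  classical
  have hcard1 : Φ₁.card + 1 = n := by
    have h1 := ht₁.card_edgeFinset
    rw [factorGraph_edgeFinset_card, Fintype.card_sum, Fintype.card_coe, Fintype.card_fin] at h1
    omega
  have hcard2 : Φ₂.card + 1 = m := by
    have h1 := ht₂.card_edgeFinset
    rw [factorGraph_edgeFinset_card, Fintype.card_sum, Fintype.card_coe, Fintype.card_fin] at h1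
    omega
  have hle : (comboFormula n m Φ₁ Φ₂ o₁ o₂).card ≤ Φ₁.card + Φ₂.card + 2 := by
    have l1 := Finset.card_union_le
      (Φ₁.image (mapClause (emb1 n m) (emb1_injective n m)) ∪
       Φ₂.image (mapClause (emb2 n m) (emb2_injective n m)))
      ({comboClause1 n m o₁, comboClause2 n m o₂} : Finset _)
    have l2 := Finset.card_union_le
      (Φ₁.image (mapClause (emb1 n m) (emb1_injective n m)))
      (Φ₂.image (mapClause (emb2 n m) (emb2_injective n m)))
    have l3 := Finset.card_image_le (s := Φ₁) (f := mapClause (emb1 n m) (emb1_injective n m))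
    have l4 := Finset.card_image_le (s := Φ₂) (f := mapClause (emb2 n m) (emb2_injective n m))
    have l5 : ({comboClause1 n m o₁, comboClause2 n m o₂} : Finset _).card ≤ 2 :=
      Finset.card_insert_le _ _ |>.trans (by simp)
    calc (comboFormula n m Φ₁ Φ₂ o₁ o₂).card ≤ _ := l1
      _ ≤ Φ₁.card + Φ₂.card + 2 := by omega
  apply isTree_of_connected_of_card (combo_connected ht₁.isConnected ht₂.isConnected)
  rw [factorGraph_edgeFinset_card, Fintype.card_sum, Fintype.card_coe, Fintype.card_fin]
  omega

lemma combo_count (b : Bool) :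
    ((sols (comboFormula n m Φ₁ Φ₂ o₁ o₂)).filter (fun σ => σ (rootV n m) = b)).card =
    (((sols Φ₁).filter (fun σ1 => b = true → σ1 o₁ = true)) ×ˢ
     ((sols Φ₂).filter (fun σ2 => b = false → σ2 o₂ = true))).card := by
  classical
  have hsol : ∀ σ : Fin (n + m + 1) → Bool,
      σ ∈ sols (comboFormula n m Φ₁ Φ₂ o₁ o₂) ↔
      ((σ ∘ emb1 n m) ∈ sols Φ₁ ∧ (σ ∘ emb2 n m) ∈ sols Φ₂ ∧
        satClause σ (comboClause1 n m o₁) ∧ satClause σ (comboClause2 n m o₂)) := by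
    intro σ
    simp only [mem_sols]
    constructor
    · intro h
      exact ⟨fun a ha => h _ (combo_mem1 a ha), fun a ha => h _ (combo_mem2 a ha),
        h _ combo_memc1, h _ combo_memc2⟩
    · rintro ⟨h1, h2, h3, h4⟩ a ha
      rcases Finset.mem_union.mp ha with h | h
      · rcases Finset.mem_union.mp h with h | h
        · obtain ⟨a', ha', rfl⟩ := Finset.mem_image.mp h
          exact h1 a' ha'
        · obtain ⟨a', ha', rfl⟩ := Finset.mem_image.mp h
          exact h2 a' ha'
      · rcases Finset.mem_insert.mp h with rfl | h
        · exact h3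
        · rw [Finset.mem_singleton] at h; subst h; exact h4
  refine Finset.card_bij' (fun σ _ => (σ ∘ emb1 n m, σ ∘ emb2 n m))
    (fun st _ => glueF n m b st.1 st.2) ?_ ?_ ?_ ?_
  · intro σ hσ
    rw [Finset.mem_filter] at hσ
    obtain ⟨hs, hob⟩ := hσ
    obtain ⟨h1, h2, h3, h4⟩ := (hsol σ).mp hs
    rw [Finset.mem_product]
    constructor
    · rw [Finset.mem_filter]
      refine ⟨h1, fun hb => ?_⟩
      rcases h3 with h | h
      · exfalso
        rw [hb] at hob
        have : (true : Bool) = false := hob.symm.trans h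
        simp at this
      · exact h
    · rw [Finset.mem_filter]
      refine ⟨h2, fun hb => ?_⟩
      rcases h4 with h | h
      · exfalso
        rw [hb] at hob
        have : (false : Bool) = true := hob.symm.trans h
        simp at this
      · exact h
  · intro st hst
    rw [Finset.mem_product] at hst
    obtain ⟨h1', h2'⟩ := hst
    rw [Finset.mem_filter] at h1' h2'
    obtain ⟨h1, hc1⟩ := h1'
    obtain ⟨h2, hc2⟩ := h2'
    rw [Finset.mem_filter]
    constructor
    · rw [hsol]
      refine ⟨?_, ?_, ?_, ?_⟩
      · have he : glueF n m b st.1 st.2 ∘ emb1 n m = st.1 :=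
          funext fun i => glueF_emb1 n m b st.1 st.2 i
        rw [he]; exact h1
      · have he : glueF n m b st.1 st.2 ∘ emb2 n m = st.2 :=
          funext fun j => glueF_emb2 n m b st.1 st.2 j
        rw [he]; exact h2
      · cases b with
        | true => exact Or.inr ((glueF_emb1 n m true st.1 st.2 o₁).trans (hc1 rfl))
        | false => exact Or.inl (glueF_root n m false st.1 st.2)
      · cases b with
        | true => exact Or.inl (glueF_root n m true st.1 st.2)
        | false => exact Or.inr ((glueF_emb2 n m false st.1 st.2 o₂).trans (hc2 rfl))
    · exact glueF_root n m b st.1 st.2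
  · intro σ hσ
    rw [Finset.mem_filter] at hσ
    exact glueF_recon n m b σ hσ.2
  · intro st hst
    exact Prod.ext (funext fun i => glueF_emb1 n m b st.1 st.2 i)
      (funext fun j => glueF_emb2 n m b st.1 st.2 j)

lemma ratio_arith (a b c d : ℕ) (hb : 0 < b) (hd : 0 < d) :
    ((a * d : ℕ) : ℝ) / ((a * d + b * c : ℕ) : ℝ) =
      ((a : ℝ) / b) / ((a : ℝ) / b + (c : ℝ) / d) := by
  push_cast
  by_cases hac : a = 0 ∧ c = 0
  · obtain ⟨rfl, rfl⟩ := hac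
    simp
  · have hb' : (b : ℝ) ≠ 0 := Nat.cast_ne_zero.mpr hb.ne'
    have hd' : (d : ℝ) ≠ 0 := Nat.cast_ne_zero.mpr hd.ne'
    have hS : (0 : ℝ) < (a : ℝ) * d + (b : ℝ) * c := by
      have hSnat : 0 < a * d + b * c := by
        rcases not_and_or.mp hac with h | h
        · have := Nat.mul_pos (Nat.pos_of_ne_zero h) hd
          omega
        · have := Nat.mul_pos hb (Nat.pos_of_ne_zero h)
          omega
      exact_mod_cast hSnat
    have key : (a : ℝ) / b + (c : ℝ) / d = ((a : ℝ) * d + (b : ℝ) * c) / ((b : ℝ) * d) := by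
      field_simp
    have hden : ((a : ℝ) * d + (b : ℝ) * c) / ((b : ℝ) * d) ≠ 0 :=
      ne_of_gt (div_pos hS (by positivity))
    rw [key, div_eq_div_iff hS.ne' hden]
    field_simp

lemma combo_marginal (hne1 : (sols Φ₁).Nonempty) (hne2 : (sols Φ₂).Nonempty) :
    marginal (comboFormula n m Φ₁ Φ₂ o₁ o₂) (rootV n m) true =
      (marginal Φ₁ o₁ true) / (marginal Φ₁ o₁ true + marginal Φ₂ o₂ true) := by
  classical
  have e1 : (sols Φ₁).filter (fun σ1 => true = true → σ1 o₁ = true) =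
      (sols Φ₁).filter (fun σ1 => σ1 o₁ = true) :=
    Finset.filter_congr (by intro x _; simp)
  have e2 : (sols Φ₂).filter (fun σ2 => true = false → σ2 o₂ = true) = sols Φ₂ :=
    Finset.filter_true_of_mem (by intro x _; simp)
  have e3 : (sols Φ₁).filter (fun σ1 => false = true → σ1 o₁ = true) = sols Φ₁ :=
    Finset.filter_true_of_mem (by intro x _; simp)
  have e4 : (sols Φ₂).filter (fun σ2 => false = false → σ2 o₂ = true) =
      (sols Φ₂).filter (fun σ2 => σ2 o₂ = true) :=
    Finset.filter_congr (by intro x _; simp)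
  have hTT : ((sols (comboFormula n m Φ₁ Φ₂ o₁ o₂)).filter
      (fun σ => σ (rootV n m) = true)).card =
      ((sols Φ₁).filter (fun σ1 => σ1 o₁ = true)).card * (sols Φ₂).card := by
    rw [combo_count true, e1, e2, Finset.card_product]
  have hFF : ((sols (comboFormula n m Φ₁ Φ₂ o₁ o₂)).filter
      (fun σ => σ (rootV n m) = false)).card =
      (sols Φ₁).card * ((sols Φ₂).filter (fun σ2 => σ2 o₂ = true)).card := by
    rw [combo_count false, e3, e4, Finset.card_product]
  have htot : (sols (comboFormula n m Φ₁ Φ₂ o₁ o₂)).card =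
      ((sols Φ₁).filter (fun σ1 => σ1 o₁ = true)).card * (sols Φ₂).card +
      (sols Φ₁).card * ((sols Φ₂).filter (fun σ2 => σ2 o₂ = true)).card := by
    rw [← hTT, ← hFF]
    rw [← Finset.card_filter_add_card_filter_not
      (p := fun σ => σ (rootV n m) = true)]
    congr 1
    refine congrArg Finset.card (Finset.filter_congr ?_)
    intro σ _
    simp
  simp only [marginal]
  rw [hTT, htot]
  exact ratio_arith _ _ _ _ (Finset.card_pos.mpr hne1) (Finset.card_pos.mpr hne2)


/-- **Closure of `A_T` under `(p, q) ↦ p/(p+q)`**: if `p` and `q` are root marginals of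
finite tree formulas, then so is `p/(p+q)`. -/
theorem treeMarginals_ratio (p q : ℝ) (hp : p ∈ treeMarginals) (hq : q ∈ treeMarginals) :
    p / (p + q) ∈ treeMarginals := by
  obtain ⟨n, Φ₁, o₁, ht₁, hm₁⟩ := hp
  obtain ⟨m, Φ₂, o₂, ht₂, hm₂⟩ := hq
  refine ⟨n + m + 1, comboFormula n m Φ₁ Φ₂ o₁ o₂, rootV n m,
    combo_isTree ht₁ ht₂, ?_⟩
  rw [combo_marginal (sols_nonempty_of_isTree Φ₁ ht₁) (sols_nonempty_of_isTree Φ₂ ht₂),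
    hm₁, hm₂]
end

section
/- Let S ⊆ (0,1) be a set of real numbers such that: (i) 1/2 ∈ S; (ii) if q ∈ S then 1 − q ∈ S; (iii) if q ∈ S then q/(1+q) ∈ S; (iv) if p ∈ S and q ∈ S then p/(p+q) ∈ S. Then S contains every rational number in (0,1), i.e. ℚ ∩ (0,1) ⊆ S. -/
/-- **Generation of all rationals in (0,1).** If `S ⊆ (0,1)` contains `1/2`, is closed
under `q ↦ 1 - q`, `q ↦ q/(1+q)` and `(p,q) ↦ p/(p+q)`, then `ℚ ∩ (0,1) ⊆ S`. -/
theorem rat_subset_of_closure (S : Set ℝ) (hS : S ⊆ Set.Ioo (0 : ℝ) 1)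
    (h_half : (1 / 2 : ℝ) ∈ S)
    (h_sub : ∀ q ∈ S, 1 - q ∈ S)
    (h_inc : ∀ q ∈ S, q / (1 + q) ∈ S)
    (h_ratio : ∀ p ∈ S, ∀ q ∈ S, p / (p + q) ∈ S) :
    ∀ x : ℚ, (x : ℝ) ∈ Set.Ioo (0 : ℝ) 1 → (x : ℝ) ∈ S := by
  have key : ∀ n a b : ℕ, 0 < a → 0 < b → a + b = n →
      ((a : ℝ) / ((a : ℝ) + (b : ℝ))) ∈ S := by
    intro n
    induction n using Nat.strong_induction_on with
    | _ n ih =>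
      have step : ∀ a b : ℕ, 0 < a → a < b → a + b = n →
          ((a : ℝ) / ((a : ℝ) + (b : ℝ))) ∈ S := by
        intro a b ha hab hn
        have hq : ((a : ℝ) / ((a : ℝ) + ((b - a : ℕ) : ℝ))) ∈ S :=
          ih b (by omega) a (b - a) ha (by omega) (by omega)
        have hbR : ((a : ℝ) + ((b - a : ℕ) : ℝ)) = (b : ℝ) := by
          push_cast [Nat.cast_sub hab.le]; ring
        rw [hbR] at hq
        have h2 := h_inc _ hq
        have hbpos : (0 : ℝ) < (b : ℝ) := by exact_mod_cast Nat.lt_of_lt_of_le ha hab.le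
        have hab2 : (0 : ℝ) < (a : ℝ) + (b : ℝ) := by positivity
        convert h2 using 1
        field_simp
        ring
      intro a b ha hb hn
      have haR : (0 : ℝ) < (a : ℝ) := by exact_mod_cast ha
      have hbRp : (0 : ℝ) < (b : ℝ) := by exact_mod_cast hb
      rcases lt_trichotomy a b with h | h | h
      · exact step a b ha h hn
      · subst h
        have he : ((a : ℝ) / ((a : ℝ) + (a : ℝ))) = 1 / 2 := by
          field_simp; ring
        rw [he]; exact h_half
      · have hb' := step b a hb h (by omega)
        have h2 := h_sub _ hb'
        have hpos : (0 : ℝ) < (a : ℝ) + (b : ℝ) := by positivity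
        convert h2 using 1
        field_simp
        ring
  intro x hx
  obtain ⟨hx0, hx1⟩ := hx
  have hnum : 0 < x.num := by
    have : (0 : ℚ) < x := by exact_mod_cast hx0
    exact Rat.num_pos.mpr this
  have hlt : x.num < (x.den : ℤ) := by
    have hx1' : x < 1 := by exact_mod_cast hx1
    have := (Rat.lt_one_iff_num_lt_denom).mpr hx1'
    exact_mod_cast this
  set a : ℕ := x.num.toNat with ha_def
  set b : ℕ := x.den - a with hb_def
  have haN : 0 < a := by omega
  have hab : a < x.den := by omega
  have hbN : 0 < b := by omega
  have hkey := key (a + b) a b haN hbN rfl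
  have hden : (a : ℝ) + (b : ℝ) = (x.den : ℝ) := by
    have : a + b = x.den := by omega
    exact_mod_cast this
  have hnumR : (a : ℝ) = (x.num : ℝ) := by
    have : (a : ℤ) = x.num := Int.toNat_of_nonneg hnum.le
    exact_mod_cast this
  have hxeq : (x : ℝ) = (a : ℝ) / ((a : ℝ) + (b : ℝ)) := by
    rw [hden, hnumR, Rat.cast_def]
  rw [hxeq]
  exact hkey
end

section
/- Almost surely, θ_o = Σ_{i=1}^{d_∅} (−s_{(i)}) · log((1 + s'_{(i)} · tanh(θ_{(i)}/2))/2), where θ_{(i)} denotes the almost sure limit of θ_{(i)}^{(ℓ)} at the i-th child (i) of the root (which exists almost surely for every i). -/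
open MeasureTheory ProbabilityTheory Filter

/-- The data of the branching-process recursion: jointly independent families, indexed by
the vertices `v : List ℕ` of the Ulam–Harris tree, of offspring numbers `deg v` (Poisson(d)),
and uniform signs `s v`, `s' v` (encoded as uniform values in `{0, 1} ⊆ ℕ`, where `1`
encodes the sign `+1` and `0` encodes the sign `-1`).  The three families are bundled as a
single jointly independent family `Z (v, i)`, `i : Fin 3`, with `deg v = Z (v, 0)`,
`s v = Z (v, 1)` and `s' v = Z (v, 2)`. -/
structure GWSetup (Ω : Type*) [MeasurableSpace Ω] (P : Measure Ω) (d : ℝ) where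
  Z : List ℕ × Fin 3 → Ω → ℕ
  meas : ∀ p, Measurable (Z p)
  indep : iIndepFun Z P
  poisson : ∀ (v : List ℕ) (k : ℕ),
    P {ω | Z (v, 0) ω = k} = ENNReal.ofReal (Real.exp (-d) * d ^ k / (Nat.factorial k : ℝ))
  unif_s : ∀ v : List ℕ,
    P {ω | Z (v, 1) ω = 0} = 1 / 2 ∧ P {ω | Z (v, 1) ω = 1} = 1 / 2
  unif_s' : ∀ v : List ℕ,
    P {ω | Z (v, 2) ω = 0} = 1 / 2 ∧ P {ω | Z (v, 2) ω = 1} = 1 / 2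

namespace GWSetup

variable {Ω : Type*} [MeasurableSpace Ω] {P : Measure Ω} {d : ℝ}

/-- The offspring number `d_v` of vertex `v`. -/
def deg (G : GWSetup Ω P d) (v : List ℕ) (ω : Ω) : ℕ := G.Z (v, 0) ω

/-- The sign `s_v ∈ {-1, +1}` of vertex `v`, as a real number. -/
noncomputable def sgn (G : GWSetup Ω P d) (v : List ℕ) (ω : Ω) : ℝ :=
  if G.Z (v, 1) ω = 1 then 1 else -1

/-- The sign `s'_v ∈ {-1, +1}` of vertex `v`, as a real number. -/
noncomputable def sgn' (G : GWSetup Ω P d) (v : List ℕ) (ω : Ω) : ℝ :=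
  if G.Z (v, 2) ω = 1 then 1 else -1

/-- The recursion `θ_v^{(0)} = 0`,
`θ_v^{(ℓ)} = -∑_{i=1}^{d_v} s_{v·i} log((1 + s'_{v·i} tanh(θ_{v·i}^{(ℓ-1)}/2))/2)`,
where the `i`-th child of `v` is `v ++ [i]`, `i ∈ {0, …, d_v - 1}`. -/
noncomputable def theta (G : GWSetup Ω P d) : ℕ → List ℕ → Ω → ℝ
  | 0, _, _ => 0
  | ℓ + 1, v, ω =>
      -∑ i ∈ Finset.range (G.deg v ω),
        G.sgn (v ++ [i]) ω *
          Real.log ((1 + G.sgn' (v ++ [i]) ω * Real.tanh (theta G ℓ (v ++ [i]) ω / 2)) / 2)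

/-- Membership of the Ulam–Harris vertex `v` in the Galton–Watson tree `T(ω)`: the smallest
set of vertices containing the root `[]` and, with every vertex `u`, all children
`u ++ [i]`, `i < deg u ω`. Concretely, every entry of `v` is below the offspring number of
the corresponding prefix. -/
def inTree (G : GWSetup Ω P d) (ω : Ω) (v : List ℕ) : Prop :=
  ∀ j : Fin v.length, v.get j < G.deg (v.take (j : ℕ)) ω

/-- The event that the Galton–Watson tree is finite. -/
def finEvent (G : GWSetup Ω P d) : Set Ω := {ω | {v : List ℕ | G.inTree ω v}.Finite}

/-- The event that the Galton–Watson tree is infinite. -/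
def infEvent (G : GWSetup Ω P d) : Set Ω := {ω | {v : List ℕ | G.inTree ω v}.Infinite}

end GWSetup

/-- `ψ(z) = (1 + tanh(z/2))/2`. -/
noncomputable def psi (z : ℝ) : ℝ := (1 + Real.tanh (z / 2)) / 2


lemma aux_abs_tanh_lt_one (x : ℝ) : |Real.tanh x| < 1 := by
  have hc : 0 < Real.cosh x := Real.cosh_pos x
  have hsq := Real.cosh_sq x
  have habs : |Real.sinh x| < Real.cosh x := abs_lt.2 ⟨by nlinarith, by nlinarith⟩
  rw [Real.tanh_eq_sinh_div_cosh, abs_div, abs_of_pos hc, div_lt_one hc]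
  exact habs

lemma aux_continuous_tanh : Continuous Real.tanh := by
  have : Real.tanh = fun x => Real.sinh x / Real.cosh x := by
    funext x; exact Real.tanh_eq_sinh_div_cosh x
  rw [this]
  exact Real.continuous_sinh.div Real.continuous_cosh fun x => (Real.cosh_pos x).ne'

/-- **The almost sure recursion for the limit:** if, for every vertex `v`, `θ_v` is an
integrable almost sure (and `L¹`) limit of the recursion `(θ_v^{(ℓ)})_ℓ`, then almost surely
`θ_o = ∑_{i=1}^{d_∅} (-s_{(i)}) log((1 + s'_{(i)} tanh(θ_{(i)}/2))/2)`. -/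
theorem theta_limit_recursion {Ω : Type*} [MeasurableSpace Ω] {P : Measure Ω}
    [IsProbabilityMeasure P] {d : ℝ} (hd : d ∈ Set.Ioo (0 : ℝ) 2) (G : GWSetup Ω P d)
    (θlim : List ℕ → Ω → ℝ)
    (hmeas : ∀ v : List ℕ, Measurable (θlim v))
    (hint : ∀ v : List ℕ, Integrable (θlim v) P)
    (hconv : ∀ v : List ℕ, ∀ᵐ ω ∂P,
      Tendsto (fun ℓ : ℕ => G.theta ℓ v ω) atTop (nhds (θlim v ω)))
    (hL1 : ∀ v : List ℕ,
      Tendsto (fun ℓ : ℕ => ∫ ω, |G.theta ℓ v ω - θlim v ω| ∂P) atTop (nhds 0)) :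
    ∀ᵐ ω ∂P, θlim ([] : List ℕ) ω =
      ∑ i ∈ Finset.range (G.deg ([] : List ℕ) ω),
        (-(G.sgn ([i]) ω)) *
          Real.log ((1 + G.sgn' ([i]) ω * Real.tanh (θlim ([i]) ω / 2)) / 2) := by
  filter_upwards [hconv ([] : List ℕ), ae_all_iff.2 (fun i : ℕ => hconv ([i]))] with ω h0 h1
  have hshift : Tendsto (fun ℓ => G.theta (ℓ + 1) ([] : List ℕ) ω) atTop (nhds (θlim ([] : List ℕ) ω)) :=
    h0.comp (tendsto_add_atTop_nat 1)
  have hterm : Tendsto (fun ℓ => G.theta (ℓ + 1) ([] : List ℕ) ω) atTop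
      (nhds (-∑ i ∈ Finset.range (G.deg ([] : List ℕ) ω),
        G.sgn ([i]) ω * Real.log ((1 + G.sgn' ([i]) ω * Real.tanh (θlim ([i]) ω / 2)) / 2))) := by
    have heq : ∀ ℓ, G.theta (ℓ + 1) ([] : List ℕ) ω = -∑ i ∈ Finset.range (G.deg ([] : List ℕ) ω),
        G.sgn ([i]) ω * Real.log ((1 + G.sgn' ([i]) ω * Real.tanh (G.theta ℓ ([i]) ω / 2)) / 2) :=
      fun ℓ => rfl
    simp only [heq]
    apply Tendsto.neg
    apply tendsto_finset_sum
    intro i _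
    apply Tendsto.const_mul
    have harg : Tendsto (fun ℓ => (1 + G.sgn' ([i]) ω * Real.tanh (G.theta ℓ ([i]) ω / 2)) / 2)
        atTop (nhds ((1 + G.sgn' ([i]) ω * Real.tanh (θlim ([i]) ω / 2)) / 2)) :=
      ((tendsto_const_nhds.add (tendsto_const_nhds.mul
        (aux_continuous_tanh.continuousAt.tendsto.comp ((h1 i).div_const 2)))).div_const 2)
    have hpos : 0 < (1 + G.sgn' ([i]) ω * Real.tanh (θlim ([i]) ω / 2)) / 2 := by
      have ht := abs_lt.1 (aux_abs_tanh_lt_one (θlim ([i]) ω / 2))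
      have hs : G.sgn' ([i]) ω = 1 ∨ G.sgn' ([i]) ω = -1 := by
        unfold GWSetup.sgn'; split <;> simp
      rcases hs with h | h <;> rw [h] <;> nlinarith [ht.1, ht.2]
    exact (Real.continuousAt_log hpos.ne').tendsto.comp harg
  have key := tendsto_nhds_unique hshift hterm
  rw [key, ← Finset.sum_neg_distrib]
  exact Finset.sum_congr rfl fun i _ => (neg_mul _ _).symm
end

section
/- Almost surely on the event {|T| < ∞} that the Galton–Watson tree T is finite, the random variable Μ_o := ψ(θ_o) is a rational number in (0,1); that is, P({Μ_o ∈ ℚ ∩ (0,1)} ∩ {|T| < ∞}) = P(|T| < ∞). -/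
open MeasureTheory ProbabilityTheory Filter

lemma psi_eq (θ : ℝ) : psi θ = 1 / (1 + Real.exp (-θ)) := by
  have hp : (0:ℝ) < Real.exp (θ/2) := Real.exp_pos _
  unfold psi
  rw [Real.tanh_eq_sinh_div_cosh, Real.sinh_eq, Real.cosh_eq,
    show -θ = -(θ/2) + -(θ/2) by ring, Real.exp_add, Real.exp_neg]
  have hc : (0:ℝ) < Real.exp (θ/2) + (Real.exp (θ/2))⁻¹ := by positivity
  field_simp
  ring

lemma psi_rat {θ : ℝ} (Q : ℚ) (hQ : 0 < (Q:ℝ)) (h : Real.exp (-θ) = Q) :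
    (∃ q : ℚ, psi θ = (q:ℝ)) ∧ psi θ ∈ Set.Ioo (0:ℝ) 1 := by
  rw [psi_eq, h]
  have h1 : (0:ℝ) < 1 + (Q:ℝ) := by linarith
  refine ⟨⟨(1 + Q)⁻¹, ?_⟩, ?_, ?_⟩
  · push_cast
    rw [inv_eq_one_div]
  · positivity
  · rw [div_lt_one h1]; linarith

lemma exists_rat_exp_sum (F : Finset ℕ) (s r : ℕ → ℝ)
    (hs : ∀ i ∈ F, s i = 1 ∨ s i = -1)
    (hr : ∀ i ∈ F, (∃ q : ℚ, r i = (q:ℝ)) ∧ r i ∈ Set.Ioo (0:ℝ) 1) :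
    ∃ Q : ℚ, 0 < (Q:ℝ) ∧ Real.exp (∑ i ∈ F, s i * Real.log (r i)) = (Q:ℝ) := by
  classical
  induction F using Finset.induction_on with
  | empty => exact ⟨1, by norm_num⟩
  | insert a F' hx ih =>
    obtain ⟨Q, hQpos, hQ⟩ := ih (fun i hi => hs i (Finset.mem_insert_of_mem hi))
      (fun i hi => hr i (Finset.mem_insert_of_mem hi))
    obtain ⟨⟨q, hq⟩, h0, h1⟩ := hr a (Finset.mem_insert_self a F')
    have hrpos : 0 < r a := h0
    have hqpos : 0 < (q:ℝ) := hq ▸ h0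
    rw [Finset.sum_insert hx, Real.exp_add, hQ]
    rcases hs a (Finset.mem_insert_self a F') with h | h
    · refine ⟨q * Q, by push_cast; exact mul_pos hqpos hQpos, ?_⟩
      rw [h, one_mul, Real.exp_log hrpos, hq]; push_cast; ring
    · refine ⟨q⁻¹ * Q, ?_, ?_⟩
      · push_cast; exact mul_pos (inv_pos.2 hqpos) hQpos
      · rw [h, neg_one_mul, Real.exp_neg, Real.exp_log hrpos, hq]; push_cast; ring
namespace GWSetup

variable {Ω : Type*} [MeasurableSpace Ω] {P : MeasureTheory.Measure Ω} {d : ℝ}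

/-- The subtree relative to vertex `v`. -/
def relTree (G : GWSetup Ω P d) (ω : Ω) (v : List ℕ) : Set (List ℕ) :=
  {w | ∀ j : Fin w.length, w.get j < G.deg (v ++ w.take (j : ℕ)) ω}

lemma relTree_nil (G : GWSetup Ω P d) (ω : Ω) :
    G.relTree ω ([] : List ℕ) = {v : List ℕ | G.inTree ω v} := by
  simp [relTree, inTree]

lemma nil_mem_relTree (G : GWSetup Ω P d) (ω : Ω) (v : List ℕ) : ([] : List ℕ) ∈ G.relTree ω v := by
  intro j; exact absurd j.2 (by simp)

lemma mem_relTree_cons (G : GWSetup Ω P d) (ω : Ω) (v : List ℕ) (i : ℕ) (w : List ℕ) :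
    (i :: w) ∈ G.relTree ω v ↔ i < G.deg v ω ∧ w ∈ G.relTree ω (v ++ [i]) := by
  constructor
  · intro h
    refine ⟨by simpa using h ⟨0, Nat.succ_pos _⟩, fun j => ?_⟩
    have := h ⟨(j : ℕ) + 1, Nat.succ_lt_succ j.2⟩
    simpa [List.take_succ_cons] using this
  · rintro ⟨h0, h⟩ j
    rcases j with ⟨jj, hj⟩
    cases jj with
    | zero => simpa using h0
    | succ k =>
      have := h ⟨k, Nat.lt_of_succ_lt_succ hj⟩
      simpa [List.take_succ_cons] using this

end GWSetup
namespace GWSetup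

variable {Ω : Type*} [MeasurableSpace Ω] {P : MeasureTheory.Measure Ω} {d : ℝ}

lemma eventually_const (G : GWSetup Ω P d) (ω : Ω) :
    ∀ n (v : List ℕ), (G.relTree ω v).Finite → (G.relTree ω v).ncard ≤ n →
    ∃ L θs, (∀ ℓ, L ≤ ℓ → G.theta ℓ v ω = θs) ∧
      (∃ q : ℚ, psi θs = (q : ℝ)) ∧ psi θs ∈ Set.Ioo (0:ℝ) 1 := by
  intro n
  induction n with
  | zero =>
    intro v hfin hcard
    exfalso
    have : 0 < (G.relTree ω v).ncard :=
      (Set.ncard_pos hfin).2 ⟨[], G.nil_mem_relTree ω v⟩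
    omega
  | succ n ih =>
    intro v hfin hcard
    have hchild : ∀ i : ℕ, i < G.deg v ω →
        (G.relTree ω (v ++ [i])).Finite ∧ (G.relTree ω (v ++ [i])).ncard ≤ n := by
      intro i hi
      have hpre : G.relTree ω (v ++ [i]) = (fun w => i :: w) ⁻¹' (G.relTree ω v) := by
        ext w
        simp [Set.mem_preimage, G.mem_relTree_cons, hi]
      have hfin' : (G.relTree ω (v ++ [i])).Finite := by
        rw [hpre]
        exact hfin.preimage List.cons_injective.injOn
      refine ⟨hfin', ?_⟩
      have hss : (fun w => i :: w) '' (G.relTree ω (v ++ [i])) ⊂ G.relTree ω v := by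
        constructor
        · rintro _ ⟨w, hw, rfl⟩
          exact (G.mem_relTree_cons ω v i w).2 ⟨hi, hw⟩
        · intro hsub
          obtain ⟨w, _, hw⟩ := hsub (G.nil_mem_relTree ω v)
          exact List.cons_ne_nil _ _ hw
      have h1 : (G.relTree ω (v ++ [i])).ncard < (G.relTree ω v).ncard := by
        rw [← Set.ncard_image_of_injective _ (List.cons_injective (a := i))]
        exact Set.ncard_lt_ncard hss hfin
      omega
    have hex : ∀ i : ℕ, ∃ L θs, i < G.deg v ω →
        ((∀ ℓ, L ≤ ℓ → G.theta ℓ (v ++ [i]) ω = θs) ∧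
          (∃ q : ℚ, psi θs = (q : ℝ)) ∧ psi θs ∈ Set.Ioo (0:ℝ) 1) := by
      intro i
      by_cases hi : i < G.deg v ω
      · obtain ⟨L, θs, h⟩ := ih (v ++ [i]) (hchild i hi).1 (hchild i hi).2
        exact ⟨L, θs, fun _ => h⟩
      · exact ⟨0, 0, fun h => absurd h hi⟩
    choose L θs hLθ using hex
    set M := (Finset.range (G.deg v ω)).sup L with hM
    set θfin : ℝ := -∑ i ∈ Finset.range (G.deg v ω),
        G.sgn (v ++ [i]) ω *
          Real.log ((1 + G.sgn' (v ++ [i]) ω * Real.tanh (θs i / 2)) / 2) with hθfin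
    have hterm : ∀ i ∈ Finset.range (G.deg v ω),
        ((∃ q : ℚ, (1 + G.sgn' (v ++ [i]) ω * Real.tanh (θs i / 2)) / 2 = (q:ℝ)) ∧
          (1 + G.sgn' (v ++ [i]) ω * Real.tanh (θs i / 2)) / 2 ∈ Set.Ioo (0:ℝ) 1) := by
      intro i hi
      rw [Finset.mem_range] at hi
      obtain ⟨_, ⟨q, hq⟩, hIoo⟩ := hLθ i hi
      unfold psi at hq hIoo
      by_cases hs' : G.Z (v ++ [i], 2) ω = 1
      · have : G.sgn' (v ++ [i]) ω = 1 := by simp [sgn', hs']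
        rw [this, one_mul]
        exact ⟨⟨q, hq⟩, hIoo⟩
      · have : G.sgn' (v ++ [i]) ω = -1 := by simp [sgn', hs']
        rw [this]
        have heq : (1 + -1 * Real.tanh (θs i / 2)) / 2
            = 1 - (1 + Real.tanh (θs i / 2)) / 2 := by ring
        rw [heq, hq]
        refine ⟨⟨1 - q, by push_cast; ring⟩, ?_, ?_⟩
        · have := hIoo.2; linarith
        · have := hIoo.1; linarith
    refine ⟨M + 1, θfin, ?_, ?_⟩
    · intro ℓ hℓ
      match ℓ, hℓ with
      | (k+1), hℓ =>
        have hk : M ≤ k := Nat.le_of_succ_le_succ hℓ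
        show -∑ i ∈ Finset.range (G.deg v ω),
          G.sgn (v ++ [i]) ω *
            Real.log ((1 + G.sgn' (v ++ [i]) ω * Real.tanh (G.theta k (v ++ [i]) ω / 2)) / 2)
          = θfin
        rw [hθfin]
        congr 1
        refine Finset.sum_congr rfl fun i hi => ?_
        rw [Finset.mem_range] at hi
        rw [(hLθ i hi).1 k (le_trans (Finset.le_sup (Finset.mem_range.2 hi)) hk)]
    · have hsgn : ∀ i ∈ Finset.range (G.deg v ω),
          G.sgn (v ++ [i]) ω = 1 ∨ G.sgn (v ++ [i]) ω = -1 := by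
        intro i _
        unfold sgn
        split <;> simp
      obtain ⟨Q, hQpos, hQ⟩ := exists_rat_exp_sum (Finset.range (G.deg v ω))
        (fun i => G.sgn (v ++ [i]) ω)
        (fun i => (1 + G.sgn' (v ++ [i]) ω * Real.tanh (θs i / 2)) / 2) hsgn hterm
      exact psi_rat Q hQpos (by rw [hθfin, neg_neg, hQ])

end GWSetup


/-- **On the event that the Galton–Watson tree is finite, `Μ_o = ψ(θ_o)` is almost surely a
rational number in `(0,1)`:** `P({Μ_o ∈ ℚ ∩ (0,1)} ∩ {|T| < ∞}) = P(|T| < ∞)`. -/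
theorem mu_rational_on_finite_tree {Ω : Type*} [MeasurableSpace Ω] {P : Measure Ω}
    [IsProbabilityMeasure P] {d : ℝ} (hd : d ∈ Set.Ioo (0 : ℝ) 2) (G : GWSetup Ω P d)
    (θo : Ω → ℝ) (hmeas : Measurable θo) (hint : Integrable θo P)
    (hconv : ∀ᵐ ω ∂P, Tendsto (fun ℓ : ℕ => G.theta ℓ ([] : List ℕ) ω) atTop (nhds (θo ω)))
    (hL1 : Tendsto (fun ℓ : ℕ => ∫ ω, |G.theta ℓ ([] : List ℕ) ω - θo ω| ∂P) atTop (nhds 0)) :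
    P ({ω | (∃ q : ℚ, psi (θo ω) = (q : ℝ)) ∧ psi (θo ω) ∈ Set.Ioo (0 : ℝ) 1} ∩ G.finEvent) =
      P G.finEvent := by
  apply le_antisymm
  · exact measure_mono Set.inter_subset_right
  · apply measure_mono_ae
    filter_upwards [hconv] with ω hω hfin
    refine ⟨?_, hfin⟩
    have hfin' : (G.relTree ω ([] : List ℕ)).Finite := by
      rw [G.relTree_nil]; exact hfin
    obtain ⟨L, θs, hconst, hrat, hIoo⟩ :=
      G.eventually_const ω (G.relTree ω ([] : List ℕ)).ncard ([] : List ℕ) hfin' le_rfl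
    have hθo : θo ω = θs := by
      have h2 : Tendsto (fun ℓ => G.theta ℓ ([] : List ℕ) ω) atTop (nhds θs) := by
        apply Tendsto.congr' ?_ tendsto_const_nhds
        filter_upwards [eventually_ge_atTop L] with ℓ hℓ
        exact (hconst ℓ hℓ).symm
      exact tendsto_nhds_unique hω h2
    simp only [Set.mem_setOf_eq, hθo]
    exact ⟨hrat, hIoo⟩
end

section
/- Let d ∈ (0,2) and let π_d denote the distribution of Μ_o := ψ(θ_o). Then every rational number q ∈ (0,1) is an atom of π_d: π_d({q}) > 0 for all q ∈ ℚ ∩ (0,1). -/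
open MeasureTheory ProbabilityTheory Filter

lemma tanh_log_half {R : ℝ} (hR : 0 < R) :
    Real.tanh (Real.log R / 2) = (R - 1) / (R + 1) := by
  have hE : (0:ℝ) < Real.exp (Real.log R / 2) := Real.exp_pos _
  set E := Real.exp (Real.log R / 2) with hEdef
  have hE2 : E * E = R := by
    rw [hEdef, ← Real.exp_add, show Real.log R / 2 + Real.log R / 2 = Real.log R by ring,
      Real.exp_log hR]
  rw [Real.tanh_eq_sinh_div_cosh, Real.sinh_eq, Real.cosh_eq, Real.exp_neg, ← hEdef, ← hE2]
  have h1 : E ≠ 0 := ne_of_gt hE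
  have h2 : E + E⁻¹ ≠ 0 := by positivity
  have h3 : E * E + 1 ≠ 0 := by positivity
  rw [div_div_div_comm]
  rw [div_self (by norm_num : (2:ℝ) ≠ 0), div_one]
  rw [div_eq_div_iff h2 h3]
  field_simp

lemma step_eq {R : ℝ} (hR : 0 < R) :
    (1 + (-1) * Real.tanh (Real.log R / 2)) / 2 = (R + 1)⁻¹ := by
  rw [tanh_log_half hR]
  have : R + 1 ≠ 0 := by positivity
  field_simp
  ring

noncomputable def sval (b : Bool) : ℝ := if b then 1 else -1

noncomputable def pathVal : List Bool → ℝ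
  | [] => 0
  | b :: L => -(sval b * Real.log ((1 + (-1) * Real.tanh (pathVal L / 2)) / 2))

lemma reach : ∀ n a b : ℕ, a + b ≤ n → 0 < a → 0 < b →
    ∃ L : List Bool, pathVal L = Real.log ((a : ℝ) / b) := by
  intro n
  induction n with
  | zero => intro a b h ha hb; omega
  | succ n ih =>
    intro a b hab ha hb
    rcases lt_trichotomy a b with hlt | heq | hgt
    · obtain ⟨L, hL⟩ := ih (b - a) a (by omega) (by omega) ha
      refine ⟨false :: L, ?_⟩
      have hR : (0:ℝ) < ((b - a : ℕ) : ℝ) / (a : ℝ) :=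
        div_pos (by exact_mod_cast Nat.sub_pos_of_lt hlt) (by exact_mod_cast ha)
      show -(sval false * Real.log ((1 + (-1) * Real.tanh (pathVal L / 2)) / 2)) = _
      rw [hL, step_eq hR]
      have hab' : (((b - a : ℕ) : ℝ) / (a:ℝ) + 1)⁻¹ = (a : ℝ) / b := by
        rw [Nat.cast_sub hlt.le]
        have ha' : (a:ℝ) ≠ 0 := by exact_mod_cast ha.ne'
        have hb' : (b:ℝ) ≠ 0 := by exact_mod_cast hb.ne'
        field_simp
        rw [sub_add_cancel, div_self hb']
      rw [hab']
      simp [sval]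
    · subst heq
      refine ⟨[], ?_⟩
      show (0:ℝ) = _
      rw [div_self (by exact_mod_cast ha.ne' : (a:ℝ) ≠ 0), Real.log_one]
    · obtain ⟨L, hL⟩ := ih (a - b) b (by omega) (by omega) hb
      refine ⟨true :: L, ?_⟩
      have hR : (0:ℝ) < ((a - b : ℕ) : ℝ) / (b : ℝ) :=
        div_pos (by exact_mod_cast Nat.sub_pos_of_lt hgt) (by exact_mod_cast hb)
      show -(sval true * Real.log ((1 + (-1) * Real.tanh (pathVal L / 2)) / 2)) = _
      rw [hL, step_eq hR, Real.log_inv]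
      have hab' : ((a - b : ℕ) : ℝ) / (b:ℝ) + 1 = (a : ℝ) / b := by
        rw [Nat.cast_sub hgt.le]
        have hb' : (b:ℝ) ≠ 0 := by exact_mod_cast hb.ne'
        field_simp
        ring
      rw [hab']
      simp [sval]

lemma psi_log {R : ℝ} (hR : 0 < R) : psi (Real.log R) = R / (R + 1) := by
  unfold psi
  rw [tanh_log_half hR]
  have : R + 1 ≠ 0 := by positivity
  field_simp
  ring

lemma theta_path {Ω : Type*} [MeasurableSpace Ω] {P : MeasureTheory.Measure Ω} {d : ℝ}
    (G : GWSetup Ω P d) (ω : Ω) (L : List Bool)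
    (hdeg : ∀ m, m < L.length → G.deg (List.replicate m 0) ω = 1)
    (hdegh : G.deg (List.replicate L.length 0) ω = 0)
    (hs : ∀ m (hm : m < L.length), G.sgn (List.replicate (m+1) 0) ω = sval (L.get ⟨m, hm⟩))
    (hs' : ∀ m, m < L.length → G.sgn' (List.replicate (m+1) 0) ω = -1) :
    ∀ ℓ k, k ≤ L.length → L.length - k ≤ ℓ →
      G.theta ℓ (List.replicate k 0) ω = pathVal (L.drop k) := by
  intro ℓ
  induction ℓ with
  | zero =>
    intro k hk hk'
    have hkeq : k = L.length := by omega
    subst hkeq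
    rw [List.drop_length]
    rfl
  | succ ℓ ih =>
    intro k hk hk'
    rcases eq_or_lt_of_le hk with hkeq | hlt
    · subst hkeq
      rw [List.drop_length]
      show -∑ i ∈ Finset.range (G.deg (List.replicate L.length 0) ω), _ = _
      rw [hdegh]
      simp [pathVal]
    · have h1 : G.deg (List.replicate k 0) ω = 1 := hdeg k hlt
      show -∑ i ∈ Finset.range (G.deg (List.replicate k 0) ω), _ = _
      rw [h1, Finset.sum_range_one, ← List.replicate_succ',
        ih (k+1) hlt (by omega), hs k hlt, hs' k hlt,
        List.drop_eq_getElem_cons hlt]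
      rfl

/-- **Every rational in `(0,1)` is an atom of `π_d`,** the law of `Μ_o = ψ(θ_o)`:
for every `q ∈ ℚ ∩ (0,1)`, `π_d({q}) > 0`. -/
theorem rationals_are_atoms {Ω : Type*} [MeasurableSpace Ω] {P : Measure Ω}
    [IsProbabilityMeasure P] {d : ℝ} (hd : d ∈ Set.Ioo (0 : ℝ) 2) (G : GWSetup Ω P d)
    (θo : Ω → ℝ) (hmeas : Measurable θo) (hint : Integrable θo P)
    (hconv : ∀ᵐ ω ∂P, Tendsto (fun ℓ : ℕ => G.theta ℓ ([] : List ℕ) ω) atTop (nhds (θo ω)))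
    (hL1 : Tendsto (fun ℓ : ℕ => ∫ ω, |G.theta ℓ ([] : List ℕ) ω - θo ω| ∂P) atTop (nhds 0)) :
    ∀ q : ℚ, (q : ℝ) ∈ Set.Ioo (0 : ℝ) 1 →
      0 < (P.map fun ω => psi (θo ω)) {(q : ℝ)} := by
  intro q hq
  obtain ⟨hq0, hq1⟩ := hq
  have hq0' : (0:ℚ) < q := by exact_mod_cast hq0
  have hq1' : q < 1 := by exact_mod_cast hq1
  have hnum : (0:ℤ) < q.num := Rat.num_pos.mpr hq0'
  have hlt : q.num < (q.den : ℤ) := Rat.lt_one_iff_num_lt_denom.mpr hq1'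
  set a : ℕ := q.num.toNat with ha
  have hadef : (a : ℤ) = q.num := Int.toNat_of_nonneg hnum.le
  have ha0 : 0 < a := by omega
  have haden : a < q.den := by omega
  set c : ℕ := q.den - a with hc
  have hc0 : 0 < c := by omega
  obtain ⟨L, hL⟩ := reach (a + c) a c le_rfl ha0 hc0
  set h := L.length with hh
  have hca : (0:ℝ) < (a:ℝ) / (c:ℝ) :=
    div_pos (by exact_mod_cast ha0) (by exact_mod_cast hc0)
  -- the value of psi at the limit is q
  have hpsi : psi (pathVal L) = (q : ℝ) := by
    rw [hL, psi_log hca]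
    have hq_eq : (q:ℝ) = (a:ℝ) / (q.den:ℝ) := by
      rw [Rat.cast_def]
      congr 1
      exact_mod_cast hadef.symm
    rw [hq_eq]
    have hden_eq : (q.den : ℝ) = (a:ℝ) + (c:ℝ) := by
      have : q.den = a + c := by omega
      exact_mod_cast congrArg (Nat.cast : ℕ → ℝ) this
    rw [hden_eq]
    have ha' : (a:ℝ) ≠ 0 := by exact_mod_cast ha0.ne'
    have hc' : (c:ℝ) ≠ 0 := by exact_mod_cast hc0.ne'
    have hac : (a:ℝ)/(c:ℝ) + 1 ≠ 0 := by positivity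
    field_simp
  -- target values for the coordinates
  set tv : List ℕ × Fin 3 → ℕ := fun p =>
    if p.2 = 0 then (if p.1.length < h then 1 else 0)
    else if p.2 = 1 then (if L.getD (p.1.length - 1) true then 1 else 0) else 0 with htv
  set S : Finset (List ℕ × Fin 3) :=
    ((Finset.range (h+1)).image fun m => (List.replicate m 0, (0:Fin 3))) ∪
    ((Finset.range h).image fun m => (List.replicate (m+1) 0, (1:Fin 3))) ∪
    ((Finset.range h).image fun m => (List.replicate (m+1) 0, (2:Fin 3))) with hS
  set E : Set Ω := ⋂ p ∈ S, G.Z p ⁻¹' {tv p} with hE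
  have hEprod : P E = ∏ p ∈ S, P (G.Z p ⁻¹' {tv p}) :=
    G.indep.measure_inter_preimage_eq_mul S (fun p _ => measurableSet_singleton _)
  have hd0 : (0:ℝ) < d := hd.1
  have hpos : ∀ p ∈ S, 0 < P (G.Z p ⁻¹' {tv p}) := by
    intro p hp
    have hpre : ∀ (k : ℕ), G.Z p ⁻¹' {k} = {ω | G.Z p ω = k} := fun k => rfl
    simp only [hS, Finset.mem_union, Finset.mem_image, Finset.mem_range] at hp
    rcases hp with (⟨m, hm, rfl⟩ | ⟨m, hm, rfl⟩) | ⟨m, hm, rfl⟩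
    · have htveq : tv (List.replicate m 0, (0:Fin 3)) = if m < h then 1 else 0 := by
        simp [htv]
      rw [hpre, htveq]
      by_cases hmh : m < h
      · rw [if_pos hmh, G.poisson (List.replicate m 0) 1]
        apply ENNReal.ofReal_pos.mpr
        positivity
      · rw [if_neg hmh, G.poisson (List.replicate m 0) 0]
        apply ENNReal.ofReal_pos.mpr
        positivity
    · have htveq : tv (List.replicate (m+1) 0, (1:Fin 3)) =
          if L.getD m true then 1 else 0 := by simp [htv]
      rw [hpre, htveq]
      by_cases hb : L.getD m true
      · rw [if_pos hb, (G.unif_s (List.replicate (m+1) 0)).2]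
        norm_num
      · rw [if_neg hb, (G.unif_s (List.replicate (m+1) 0)).1]
        norm_num
    · have htveq : tv (List.replicate (m+1) 0, (2:Fin 3)) = 0 := by simp [htv]
      rw [hpre, htveq, (G.unif_s' (List.replicate (m+1) 0)).1]
      norm_num
  have hEpos : 0 < P E := by
    rw [hEprod]
    exact CanonicallyOrderedAdd.prod_pos.mpr hpos
  -- on E, theta at the root converges to pathVal L
  have hEconv : ∀ ω ∈ E, Tendsto (fun ℓ : ℕ => G.theta ℓ ([] : List ℕ) ω) atTop
      (nhds (pathVal L)) := by
    intro ω hω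
    rw [hE, Set.mem_iInter₂] at hω
    have hdeg : ∀ m, m < h → G.deg (List.replicate m 0) ω = 1 := by
      intro m hm
      have hpS : (List.replicate m 0, (0:Fin 3)) ∈ S := by
        simp only [hS, Finset.mem_union, Finset.mem_image, Finset.mem_range]
        exact Or.inl (Or.inl ⟨m, by omega, rfl⟩)
      have := hω _ hpS
      simp only [Set.mem_preimage, Set.mem_singleton_iff, htv, List.length_replicate,
        if_pos hm] at this
      simpa [GWSetup.deg] using this
    have hdegh : G.deg (List.replicate h 0) ω = 0 := by
      have hpS : (List.replicate h 0, (0:Fin 3)) ∈ S := by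
        simp only [hS, Finset.mem_union, Finset.mem_image, Finset.mem_range]
        exact Or.inl (Or.inl ⟨h, by omega, rfl⟩)
      have := hω _ hpS
      simp only [Set.mem_preimage, Set.mem_singleton_iff, htv, List.length_replicate,
        lt_irrefl, if_neg (lt_irrefl h)] at this
      simpa [GWSetup.deg] using this
    have hs : ∀ m (hm : m < h), G.sgn (List.replicate (m+1) 0) ω = sval (L.get ⟨m, hm⟩) := by
      intro m hm
      have hpS : (List.replicate (m+1) 0, (1:Fin 3)) ∈ S := by
        simp only [hS, Finset.mem_union, Finset.mem_image, Finset.mem_range]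
        exact Or.inl (Or.inr ⟨m, hm, rfl⟩)
      have hz := hω _ hpS
      have htveq : tv (List.replicate (m+1) 0, (1:Fin 3)) =
          if L.get ⟨m, hm⟩ then 1 else 0 := by
        show (if L.getD ((List.replicate (m+1) (0:ℕ)).length - 1) true = true then 1 else 0) = _
        rw [List.length_replicate, Nat.add_sub_cancel, List.getD_eq_getElem L true hm]
        rfl
      rw [Set.mem_preimage, Set.mem_singleton_iff, htveq] at hz
      unfold GWSetup.sgn
      cases hgb : L.get ⟨m, hm⟩ with
      | true =>
        rw [hgb, if_pos rfl] at hz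
        rw [if_pos hz]
        simp [sval, hgb]
      | false =>
        rw [hgb] at hz
        simp only [Bool.false_eq_true, if_false] at hz
        rw [if_neg (by omega)]
        simp [sval, hgb]
    have hs' : ∀ m, m < h → G.sgn' (List.replicate (m+1) 0) ω = -1 := by
      intro m hm
      have hpS : (List.replicate (m+1) 0, (2:Fin 3)) ∈ S := by
        simp only [hS, Finset.mem_union, Finset.mem_image, Finset.mem_range]
        exact Or.inr ⟨m, hm, rfl⟩
      have hz := hω _ hpS
      have htveq : tv (List.replicate (m+1) 0, (2:Fin 3)) = 0 := by simp [htv]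
      rw [Set.mem_preimage, Set.mem_singleton_iff, htveq] at hz
      unfold GWSetup.sgn'
      rw [if_neg (by omega)]
    have key := theta_path G ω L hdeg hdegh hs hs'
    apply tendsto_atTop_of_eventually_const (i₀ := h)
    intro ℓ hℓ
    have := key ℓ 0 (Nat.zero_le _) (by omega)
    simpa using this
  -- conclude
  have htanh_cont : Continuous Real.tanh := by
    have : Real.tanh = fun x => Real.sinh x / Real.cosh x := by
      funext x; exact Real.tanh_eq_sinh_div_cosh x
    rw [this]
    exact Real.continuous_sinh.div Real.continuous_cosh fun x => (Real.cosh_pos x).ne'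
  have hψmeas : Measurable fun ω => psi (θo ω) := by
    have : Continuous psi := by
      unfold psi
      fun_prop
    exact this.measurable.comp hmeas
  rw [Measure.map_apply hψmeas (measurableSet_singleton _)]
  set C : Set Ω := {ω | Tendsto (fun ℓ : ℕ => G.theta ℓ ([] : List ℕ) ω) atTop (nhds (θo ω))}
    with hC
  have hCnull : P Cᶜ = 0 := by
    rw [MeasureTheory.ae_iff] at hconv
    exact hconv
  have hsub : E ∩ C ⊆ (fun ω => psi (θo ω)) ⁻¹' {(q:ℝ)} := by
    rintro ω ⟨hωE, hωC⟩
    have h2 : θo ω = pathVal L := tendsto_nhds_unique hωC (hEconv ω hωE)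
    simp only [Set.mem_preimage, Set.mem_singleton_iff, h2]
    exact hpsi
  calc (0:ENNReal) < P E := hEpos
    _ = P (E ∩ C) := (measure_inter_conull hCnull).symm
    _ ≤ P ((fun ω => psi (θo ω)) ⁻¹' {(q:ℝ)}) := measure_mono hsub
end
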